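/- Let m ∈ ℕ and let 𝒫 be a finite-dimensional ℝ-linear subspace of the space of polynomial functions ℝ^m → ℝ (functions given by evaluation of real polynomials in m variables). Let M ≥ dim 𝒫. Then for almost every tuple (x₁, …, x_M) ∈ (ℝ^m)^M with respect to Lebesgue measure, the evaluation map 𝒫 → ℝ^M, p ↦ (p(x₁), …, p(x_M)), is injective. -/

import Mathlib

open MeasureTheory
open Matrix

open Matrix MvPolynomial in
private lemma measurable_mvpeval {σ : Type*} (p : MvPolynomial σ ℝ) :
    Measurable fun x : σ → ℝ => eval x p := by
  classical
  simp only [eval_eq]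
  exact Finset.measurable_sum _ fun d _ =>
    (measurable_const.mul (Finset.measurable_prod _ fun i _ =>
      (measurable_pi_apply i).pow measurable_const))

open MvPolynomial in
private lemma null_zero_set_fin : ∀ (n : ℕ) (p : MvPolynomial (Fin n) ℝ), p ≠ 0 →
    volume {x : Fin n → ℝ | eval x p = 0} = 0 := by
  intro n
  induction n with
  | zero =>
    intro p hp
    obtain ⟨c, rfl⟩ := C_surjective (Fin 0) p
    have hc : c ≠ 0 := fun h => hp (by simp [h])
    have h0 : {x : Fin 0 → ℝ | eval x (C c) = 0} = ∅ := by
      ext x; simp [hc]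
    rw [show {x : Fin 0 → ℝ | eval x (C c) = 0} = ∅ from h0]; simp
  | succ n ih =>
    intro p hp
    classical
    set P1 : Polynomial (MvPolynomial (Fin n) ℝ) := finSuccEquiv ℝ n p with hP1
    have hP1ne : P1 ≠ 0 := by
      simp only [hP1, Ne, EmbeddingLike.map_eq_zero_iff]; exact hp
    set S := {x : Fin (n+1) → ℝ | eval x p = 0} with hS
    have hSm : MeasurableSet S := (measurable_mvpeval p) (measurableSet_singleton 0)
    have mp := (volume_preserving_piFinSuccAbove (fun _ : Fin (n+1) => ℝ) 0).symm
    rw [← mp.measure_preimage hSm.nullMeasurableSet]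
    set e := (MeasurableEquiv.piFinSuccAbove (fun _ : Fin (n+1) => ℝ) 0).symm
    have he : ∀ t (y : Fin n → ℝ), e (t, y) = Fin.cons t y := by
      intro t y
      simp [e, MeasurableEquiv.piFinSuccAbove, Fin.insertNthEquiv, Fin.insertNth_zero]
    have hpre : e ⁻¹' S = {ty : ℝ × (Fin n → ℝ) |
        Polynomial.eval ty.1 (Polynomial.map (eval ty.2) P1) = 0} := by
      ext ⟨t, y⟩
      simp only [Set.mem_preimage, he, hS, Set.mem_setOf_eq, eval_eq_eval_mv_eval', ← hP1]
    rw [hpre]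
    have hmeas2 : MeasurableSet {ty : ℝ × (Fin n → ℝ) |
        Polynomial.eval ty.1 (Polynomial.map (eval ty.2) P1) = 0} := by
      have hexp : ∀ ty : ℝ × (Fin n → ℝ), Polynomial.eval ty.1 (Polynomial.map (eval ty.2) P1)
          = ∑ k ∈ Finset.range (P1.natDegree + 1), eval ty.2 (P1.coeff k) * ty.1 ^ k := by
        intro ty
        rw [Polynomial.eval_eq_sum_range' (lt_of_le_of_lt Polynomial.natDegree_map_le
          (Nat.lt_succ_self P1.natDegree))]
        simp [Polynomial.coeff_map]
      simp only [hexp]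
      exact (Finset.measurable_sum _ fun k _ =>
        ((measurable_mvpeval _).comp measurable_snd).mul
          ((measurable_fst.pow measurable_const))) (measurableSet_singleton 0)
    rw [Measure.volume_eq_prod _ _, Measure.measure_prod_null hmeas2]
    have hfin : {t : ℝ | Polynomial.eval (C t) P1 = 0}.Finite := by
      have := Polynomial.finite_setOf_isRoot hP1ne
      exact (this.preimage (fun a b _ _ h => C_injective _ ℝ h))
    have h1 : ∀ᵐ t : ℝ, Polynomial.eval (C t) P1 ≠ 0 := by
      rw [ae_iff]
      simpa using hfin.measure_zero volume
    filter_upwards [h1] with t ht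
    have key : ∀ y : Fin n → ℝ, Polynomial.eval t (Polynomial.map (eval y) P1)
        = eval y (Polynomial.eval (C t) P1) := by
      intro y
      rw [Polynomial.eval_map]
      have h2 := Polynomial.hom_eval₂ P1 (RingHom.id _)
        (eval y : MvPolynomial (Fin n) ℝ →+* ℝ) (C t)
      simp only [RingHom.comp_id, eval_C] at h2
      exact (h2.symm : _)
    have hslice : (Prod.mk t ⁻¹' {ty : ℝ × (Fin n → ℝ) |
        Polynomial.eval ty.1 (Polynomial.map (eval ty.2) P1) = 0})
        = {y : Fin n → ℝ | eval y (Polynomial.eval (C t) P1) = 0} := by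
      ext y; simp [key y]
    rw [hslice]
    exact ih _ ht

open MvPolynomial in
private lemma null_zero_set (σ : Type) [Fintype σ]
    (p : MvPolynomial σ ℝ) (hp : p ≠ 0) :
    volume {x : σ → ℝ | eval x p = 0} = 0 := by
  classical
  set f := (Fintype.equivFin σ).symm
  have mp := volume_measurePreserving_piCongrLeft (fun _ : σ => ℝ) f
  have hSm : MeasurableSet {x : σ → ℝ | eval x p = 0} :=
    (measurable_mvpeval p) (measurableSet_singleton 0)
  rw [← mp.measure_preimage hSm.nullMeasurableSet]
  have hco : ∀ (z : Fin (Fintype.card σ) → ℝ) (x : σ),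
      (MeasurableEquiv.piCongrLeft (fun _ : σ => ℝ) f) z x = z (f.symm x) := by
    intro z x
    conv_lhs => rw [← f.apply_symm_apply x]
    rw [MeasurableEquiv.coe_piCongrLeft, Equiv.piCongrLeft_apply_apply]
  have hpre : (MeasurableEquiv.piCongrLeft (fun _ : σ => ℝ) f) ⁻¹' {x : σ → ℝ | eval x p = 0}
      = {z : Fin (Fintype.card σ) → ℝ | eval z (rename f.symm p) = 0} := by
    ext z
    have hfun : ((MeasurableEquiv.piCongrLeft (fun _ : σ => ℝ) f) z) = z ∘ f.symm :=
      funext (hco z)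
    simp only [Set.mem_preimage, Set.mem_setOf_eq, eval_rename, hfun]
  rw [hpre]
  refine null_zero_set_fin _ _ ?_
  intro h0
  exact hp (by simpa using congrArg (rename f) (by simpa using h0 : rename f.symm p = 0))

private lemma mp_uncurry (m : ℕ) : ∀ M : ℕ, MeasurePreserving
    (fun (x : Fin M → Fin m → ℝ) (p : Fin M × Fin m) => x p.1 p.2)
    volume volume := by
  intro M
  induction M with
  | zero =>
    have hmeas0 : Measurable (fun (x : Fin 0 → Fin m → ℝ) (p : Fin 0 × Fin m) => x p.1 p.2) := by
      rw [measurable_pi_iff]; intro p; exact p.1.elim0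
    constructor
    · exact hmeas0
    · refine Measure.ext fun s hs => ?_
      rcases s.eq_empty_or_nonempty with rfl | ⟨a, ha⟩
      · simp
      · have hs' : s = Set.univ := Set.eq_univ_of_forall fun b => by
          rwa [Subsingleton.elim b a]
        subst hs'
        rw [Measure.map_apply hmeas0 MeasurableSet.univ, Set.preimage_univ]
        rw [show (volume : Measure (Fin 0 → Fin m → ℝ)) = Measure.pi (fun _ => volume) from rfl,
          show (volume : Measure (Fin 0 × Fin m → ℝ)) = Measure.pi (fun _ => volume) from rfl]
        rw [Measure.pi_univ, Measure.pi_univ]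
        simp
  | succ M ih =>
    have e1 := volume_preserving_piFinSuccAbove (fun _ : Fin (M+1) => (Fin m → ℝ)) 0
    have e2 : MeasurePreserving
        (Prod.map (id : (Fin m → ℝ) → (Fin m → ℝ))
          (fun (x : Fin M → Fin m → ℝ) (p : Fin M × Fin m) => x p.1 p.2))
        volume volume := (MeasurePreserving.id volume).prod ih
    have e3 := volume_measurePreserving_sumPiEquivProdPi_symm
      (fun _ : Fin m ⊕ (Fin M × Fin m) => ℝ)
    let r : (Fin m ⊕ (Fin M × Fin m)) ≃ (Fin (M+1) × Fin m) :=
      { toFun := Sum.elim (fun l => ((0 : Fin (M+1)), l)) (fun q => (q.1.succ, q.2))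
        invFun := fun p => Fin.cases (Sum.inl p.2) (fun i => Sum.inr (i, p.2)) p.1
        left_inv := by rintro (l | ⟨i, l⟩) <;> simp
        right_inv := by
          rintro ⟨j, l⟩
          induction j using Fin.cases <;> simp }
    have e4 := volume_measurePreserving_piCongrLeft (fun _ : Fin (M+1) × Fin m => ℝ) r
    have hco : ∀ (z : Fin m ⊕ (Fin M × Fin m) → ℝ) (x : Fin (M+1) × Fin m),
        (MeasurableEquiv.piCongrLeft (fun _ : Fin (M+1) × Fin m => ℝ) r) z x
          = z (r.symm x) := by
      intro z x
      conv_lhs => rw [← r.apply_symm_apply x]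
      rw [MeasurableEquiv.coe_piCongrLeft, Equiv.piCongrLeft_apply_apply]
    have comp := ((e4.comp e3).comp e2).comp e1
    convert comp using 1
    case e'_3 => rfl
    funext x
    funext ⟨j, l⟩
    rw [Function.comp_apply, Function.comp_apply, Function.comp_apply, hco]
    induction j using Fin.cases with
    | zero =>
      simp [r, MeasurableEquiv.piFinSuccAbove, MeasurableEquiv.coe_sumPiEquivProdPi_symm,
        Equiv.sumPiEquivProdPi]
    | succ i =>
      simp [r, MeasurableEquiv.piFinSuccAbove, MeasurableEquiv.coe_sumPiEquivProdPi_symm,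
        Equiv.sumPiEquivProdPi, Fin.succAbove, Fin.tail]

private lemma exists_good_finset (m : ℕ) (P : Submodule ℝ ((Fin m → ℝ) → ℝ))
    [FiniteDimensional ℝ P] :
    ∀ (d : ℕ) (K : Submodule ℝ P), Module.finrank ℝ K ≤ d →
      ∃ T : Finset (Fin m → ℝ), T.card ≤ d ∧
        ∀ p ∈ K, (∀ y ∈ T, (p : (Fin m → ℝ) → ℝ) y = 0) → p = 0 := by
  classical
  intro d
  induction d with
  | zero =>
    intro K hK
    refine ⟨∅, le_rfl, fun p hp _ => ?_⟩
    have : K = ⊥ := Submodule.finrank_eq_zero.mp (Nat.le_zero.mp hK)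
    simpa [this] using hp
  | succ d ih =>
    intro K hK
    by_cases hbot : K = ⊥
    · exact ⟨∅, Nat.zero_le _, fun p hp _ => by simpa [hbot] using hp⟩
    · obtain ⟨p₀, hp₀K, hp₀⟩ := Submodule.ne_bot_iff K |>.mp hbot
      have hfn : (p₀ : (Fin m → ℝ) → ℝ) ≠ 0 := fun h => hp₀ (Subtype.ext h)
      obtain ⟨y₀, hy₀⟩ := Function.ne_iff.mp hfn
      set ev : P →ₗ[ℝ] ℝ := (LinearMap.proj y₀).comp P.subtype with hev
      have hevp₀ : ev p₀ ≠ 0 := hy₀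
      set K' := K ⊓ LinearMap.ker ev with hK'
      have hlt : K' < K := by
        refine lt_of_le_of_ne inf_le_left fun h => ?_
        have : p₀ ∈ K' := h ▸ hp₀K
        exact hevp₀ ((Submodule.mem_inf.mp this).2)
      have hrank : Module.finrank ℝ K' ≤ d :=
        Nat.lt_succ_iff.mp (lt_of_lt_of_le (Submodule.finrank_lt_finrank_of_lt hlt) hK)
      obtain ⟨T', hT'card, hT'⟩ := ih K' hrank
      refine ⟨insert y₀ T', le_trans (Finset.card_insert_le _ _) (by omega), ?_⟩
      intro p hp hvan
      refine hT' p ⟨hp, ?_⟩ fun y hy => hvan y (Finset.mem_insert_of_mem hy)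
      exact hvan y₀ (Finset.mem_insert_self _ _)

private lemma exists_good_tuple (m : ℕ) (P : Submodule ℝ ((Fin m → ℝ) → ℝ))
    [FiniteDimensional ℝ P] (M : ℕ) (hM : Module.finrank ℝ P ≤ M) :
    ∃ x : Fin M → Fin m → ℝ, ∀ p : P,
      (∀ i, (p : (Fin m → ℝ) → ℝ) (x i) = 0) → p = 0 := by
  classical
  obtain ⟨T, hTcard, hT⟩ := exists_good_finset m P (Module.finrank ℝ P) ⊤
    (le_of_eq (finrank_top ℝ P))
  set L := T.toList with hL
  have hLlen : L.length ≤ M := by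
    rw [hL, Finset.length_toList]; exact le_trans hTcard hM
  refine ⟨fun i => L.getD i 0, fun p hvan => ?_⟩
  refine hT p (Submodule.mem_top) fun y hy => ?_
  obtain ⟨k, hk, hky⟩ := List.mem_iff_getElem.mp ((Finset.mem_toList).mpr hy)
  have h2 := hvan ⟨k, lt_of_lt_of_le hk hLlen⟩
  simp only at h2
  rwa [List.getD_eq_getElem L 0 hk, hky] at h2

open Matrix in
private lemma gram_criterion {M n : ℕ} (A : Matrix (Fin M) (Fin n) ℝ) :
    (Aᵀ * A).det ≠ 0 ↔ (∀ c : Fin n → ℝ, A.mulVec c = 0 → c = 0) := by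
  constructor
  · intro hdet c hc
    have h1 : (Aᵀ * A).mulVec c = 0 := by
      rw [← Matrix.mulVec_mulVec, hc, Matrix.mulVec_zero]
    have h2 := congrArg ((Aᵀ * A)⁻¹.mulVec) h1
    rwa [Matrix.mulVec_mulVec, Matrix.nonsing_inv_mul _ (Ne.isUnit hdet),
      Matrix.one_mulVec, Matrix.mulVec_zero] at h2
  · intro hker
    contrapose! hker
    obtain ⟨v, hv0, hv⟩ := Matrix.exists_mulVec_eq_zero_iff.mpr hker
    refine ⟨v, ?_, hv0⟩
    have key : v ⬝ᵥ ((Aᵀ * A).mulVec v) = (A.mulVec v) ⬝ᵥ (A.mulVec v) := by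
      rw [← Matrix.mulVec_mulVec, Matrix.dotProduct_mulVec, Matrix.vecMul_transpose]
    have hdot : (A.mulVec v) ⬝ᵥ (A.mulVec v) = 0 := by
      rw [← key, hv, dotProduct_zero]
    exact dotProduct_self_eq_zero.mp hdot

/-- Let `𝒫` be a finite-dimensional subspace of polynomial functions
`ℝ^m → ℝ` and `M ≥ dim 𝒫`.  For almost every tuple `(x₁, …, x_M)` of sample points (with
respect to Lebesgue measure on `(ℝ^m)^M`), the evaluation map `p ↦ (p(x₁), …, p(x_M))` is
injective on `𝒫`. -/
theorem stmt8 (m : ℕ) (P : Submodule ℝ ((Fin m → ℝ) → ℝ))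
    (hpoly : ∀ p ∈ P, ∃ q : MvPolynomial (Fin m) ℝ, ∀ x : Fin m → ℝ,
      p x = MvPolynomial.eval x q)
    [FiniteDimensional ℝ P]
    (M : ℕ) (hM : Module.finrank ℝ P ≤ M) :
    ∀ᵐ x ∂(volume : Measure (Fin M → Fin m → ℝ)),
      Function.Injective
        (fun p : P => (fun i => (p : (Fin m → ℝ) → ℝ) (x i) : Fin M → ℝ)) := by
  classical
  set n := Module.finrank ℝ P with hn
  set b := Module.finBasis ℝ P with hb
  choose q hq using fun j : Fin n => hpoly (b j) (b j).2
  set A : (Fin M → Fin m → ℝ) → Matrix (Fin M) (Fin n) ℝ :=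
    fun x => Matrix.of fun i j => MvPolynomial.eval (x i) (q j) with hA
  have hmul : ∀ (x : Fin M → Fin m → ℝ) (c : Fin n → ℝ) (i : Fin M),
      (A x).mulVec c i = ((∑ j, c j • b j : P) : (Fin m → ℝ) → ℝ) (x i) := by
    intro x c i
    calc (A x).mulVec c i = ∑ j, c j * MvPolynomial.eval (x i) (q j) := by
          simp [Matrix.mulVec, dotProduct, hA, mul_comm]
    _ = ∑ j, c j * ((b j : (Fin m → ℝ) → ℝ) (x i)) := by
          simp_rw [hq]
    _ = ((∑ j, c j • b j : P) : (Fin m → ℝ) → ℝ) (x i) := by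
          rw [Submodule.coe_sum]
          simp [Finset.sum_apply]
  have key : ∀ x : Fin M → Fin m → ℝ, (∀ c : Fin n → ℝ, (A x).mulVec c = 0 → c = 0) →
      Function.Injective
        (fun p : P => (fun i => (p : (Fin m → ℝ) → ℝ) (x i) : Fin M → ℝ)) := by
    intro x hker p p' hpp'
    set c : Fin n → ℝ := fun j => b.repr (p - p') j with hc
    have hsum : (∑ j, c j • b j : P) = p - p' := b.sum_repr (p - p')
    have hAc : (A x).mulVec c = 0 := by
      funext i
      rw [hmul, hsum]
      have hcf := congrFun hpp' i
      simp only at hcf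
      simp [Submodule.coe_sub, hcf]
    have hc0 : c = 0 := hker c hAc
    have hrepr : b.repr (p - p') = 0 := Finsupp.ext fun j => congrFun hc0 j
    have : p - p' = 0 := (LinearEquiv.map_eq_zero_iff b.repr).mp hrepr
    exact sub_eq_zero.mp this
  obtain ⟨xg, hxg⟩ := exists_good_tuple m P M hM
  have good : ∀ c : Fin n → ℝ, (A xg).mulVec c = 0 → c = 0 := by
    intro c hc
    have hp0 : (∑ j, c j • b j : P) = 0 := by
      refine hxg _ fun i => ?_
      rw [← hmul xg c i, hc]; rfl
    have hli := Fintype.linearIndependent_iff.mp b.linearIndependent c hp0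
    funext j; exact hli j
  set Gd : MvPolynomial (Fin M × Fin m) ℝ :=
    (Matrix.of fun j k : Fin n => ∑ i : Fin M,
      ((MvPolynomial.rename (Prod.mk i) (q j)) * (MvPolynomial.rename (Prod.mk i) (q k)))).det
    with hGd
  have heval : ∀ x : Fin M → Fin m → ℝ,
      MvPolynomial.eval (fun pr : Fin M × Fin m => x pr.1 pr.2) Gd
        = ((A x)ᵀ * (A x)).det := by
    intro x
    rw [hGd, RingHom.map_det]
    congr 1
    ext j k
    simp [Matrix.map_apply, Matrix.mul_apply, MvPolynomial.eval_rename_prod_mk, hA]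
  have hGdne : Gd ≠ 0 := by
    intro h0
    have h1 := heval xg
    rw [h0] at h1
    simp only [map_zero] at h1
    exact ((gram_criterion (A xg)).mpr good) h1.symm
  rw [ae_iff]
  refine measure_mono_null (t := {x : Fin M → Fin m → ℝ |
    MvPolynomial.eval (fun pr : Fin M × Fin m => x pr.1 pr.2) Gd = 0}) (fun x hx => ?_) ?_
  · simp only [Set.mem_setOf_eq] at hx ⊢
    show MvPolynomial.eval (fun pr : Fin M × Fin m => x pr.1 pr.2) Gd = 0
    by_contra hne
    exact hx (key x ((gram_criterion (A x)).mp (by rwa [← heval x])))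
  · have hmeas : MeasurableSet {z : Fin M × Fin m → ℝ | MvPolynomial.eval z Gd = 0} :=
      (measurable_mvpeval Gd) (measurableSet_singleton 0)
    have hpre := (mp_uncurry m M).measure_preimage hmeas.nullMeasurableSet
    rw [show {x : Fin M → Fin m → ℝ |
          MvPolynomial.eval (fun pr : Fin M × Fin m => x pr.1 pr.2) Gd = 0}
        = (fun (x : Fin M → Fin m → ℝ) (pr : Fin M × Fin m) => x pr.1 pr.2) ⁻¹'
          {z : Fin M × Fin m → ℝ | MvPolynomial.eval z Gd = 0} from rfl, hpre]
    exact null_zero_set _ Gd hGdne
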